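/- Under Assumptions A1–A3 and A5, if in addition range(T) = Λ, then the operator I − X^⊤ S : Λ* → Λ* is an isomorphism, i.e. bijective with bounded inverse. -/

import Mathlib

/-- The transpose (dual map) `B^⊤ : Y* → X*` of a bounded linear operator `B : X → Y`. -/
noncomputable def trOp {X Y : Type*} [NormedAddCommGroup X] [NormedSpace ℂ X]
    [NormedAddCommGroup Y] [NormedSpace ℂ Y] (B : X →L[ℂ] Y) :
    (Y →L[ℂ] ℂ) →L[ℂ] (X →L[ℂ] ℂ) :=
  (ContinuousLinearMap.compL ℂ X Y ℂ).flip B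

/-- The scattering operator `S = −I + α (M + X^⊤ M X) T Ã⁻¹ T^⊤`, with `Atinv = Ã⁻¹`. -/
noncomputable def scatOp {U Lam : Type*}
    [NormedAddCommGroup U] [NormedSpace ℂ U] [NormedAddCommGroup Lam] [NormedSpace ℂ Lam]
    (T : U →L[ℂ] Lam) (X : Lam →L[ℂ] Lam) (M : Lam →L[ℂ] (Lam →L[ℂ] ℂ))
    (Atinv : (U →L[ℂ] ℂ) →L[ℂ] U) (α : ℂ) :
    (Lam →L[ℂ] ℂ) →L[ℂ] (Lam →L[ℂ] ℂ) :=
  -(ContinuousLinearMap.id ℂ (Lam →L[ℂ] ℂ)) +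
    α • (((M + (trOp X).comp (M.comp X)).comp T).comp (Atinv.comp (trOp T)))

set_option maxHeartbeats 2000000
set_option synthInstance.maxHeartbeats 400000

lemma trOp_apply {X Y : Type*} [NormedAddCommGroup X] [NormedSpace ℂ X]
    [NormedAddCommGroup Y] [NormedSpace ℂ Y] (B : X →L[ℂ] Y) (μ : Y →L[ℂ] ℂ) (x : X) :
    trOp B μ x = μ (B x) := rfl

lemma exists_clm_right_inverse {U Lam : Type*}
    [NormedAddCommGroup U] [InnerProductSpace ℂ U] [CompleteSpace U]
    [NormedAddCommGroup Lam] [InnerProductSpace ℂ Lam] [CompleteSpace Lam]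
    (T : U →L[ℂ] Lam) (hTsurj : LinearMap.range (T : U →ₗ[ℂ] Lam) = ⊤) :
    ∃ Tinv : Lam →L[ℂ] U, ∀ m : Lam, T (Tinv m) = m := by
  set K := (LinearMap.ker (T : U →ₗ[ℂ] Lam))ᗮ
  haveI : CompleteSpace (LinearMap.ker (T : U →ₗ[ℂ] Lam)) :=
    (ContinuousLinearMap.isClosed_ker T).completeSpace_coe
  haveI : CompleteSpace K := (Submodule.isClosed_orthogonal _).completeSpace_coe
  set E : K →L[ℂ] Lam := T.comp K.subtypeL with hE
  have hinj : LinearMap.ker (E : K →ₗ[ℂ] Lam) = ⊥ := by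
    rw [Submodule.eq_bot_iff]
    rintro ⟨x, hxK⟩ hx
    have hxker : x ∈ LinearMap.ker (T : U →ₗ[ℂ] Lam) := by
      simpa [E, LinearMap.mem_ker] using hx
    have : x = 0 := by
      have hd := (Submodule.orthogonal_disjoint (LinearMap.ker (T : U →ₗ[ℂ] Lam))).eq_bot
      have hx0 : x ∈ (LinearMap.ker (T : U →ₗ[ℂ] Lam)) ⊓ (LinearMap.ker (T : U →ₗ[ℂ] Lam))ᗮ := ⟨hxker, hxK⟩
      simpa [hd] using hx0
    simpa [Submodule.mk_eq_zero] using this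
  have hsurjE : LinearMap.range (E : K →ₗ[ℂ] Lam) = ⊤ := by
    rw [LinearMap.range_eq_top]
    intro m
    obtain ⟨v, hv⟩ := LinearMap.range_eq_top.1 hTsurj m
    obtain ⟨y, hy, z, hz, hyz⟩ := (LinearMap.ker (T : U →ₗ[ℂ] Lam)).exists_add_mem_mem_orthogonal v
    refine ⟨⟨z, hz⟩, ?_⟩
    have : T z = T v := by
      rw [hyz]; simp [show T y = 0 from LinearMap.mem_ker.1 hy]
    simpa [E, this] using hv
  set e := ContinuousLinearEquiv.ofBijective E hinj hsurjE
  exact ⟨K.subtypeL.comp (e.symm : Lam →L[ℂ] K), fun m => e.apply_symm_apply m⟩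

/-- if additionally `range(T) = Λ`, the operator `I − X^⊤ S` is an
isomorphism of `Λ*`, i.e. it has a bounded two-sided inverse. -/
theorem statement15
    {Uhat U Lam : Type*}
    [NormedAddCommGroup Uhat] [InnerProductSpace ℂ Uhat] [CompleteSpace Uhat]
    [NormedAddCommGroup U] [InnerProductSpace ℂ U] [CompleteSpace U]
    [NormedAddCommGroup Lam] [InnerProductSpace ℂ Lam] [CompleteSpace Lam]
    (R : Uhat →L[ℂ] U) (T : U →L[ℂ] Lam) (X : Lam →L[ℂ] Lam)
    -- Assumption A1
    (hRinj : LinearMap.ker (R : Uhat →ₗ[ℂ] U) = ⊥)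
    (hRclosed : IsClosed (Set.range R))
    -- Assumption A2
    (hX2 : X.comp X = ContinuousLinearMap.id ℂ Lam)
    (hA2 : LinearMap.range (R : Uhat →ₗ[ℂ] U) = LinearMap.ker ((ContinuousLinearMap.id ℂ Lam - X).comp T : U →ₗ[ℂ] Lam))
    (A : U →L[ℂ] (U →L[ℂ] ℂ))
    -- `Â = R^⊤ A R` bijective with bounded inverse
    (Ahatinv : (Uhat →L[ℂ] ℂ) →L[ℂ] Uhat)
    (hAhat_left : ∀ uhat : Uhat, Ahatinv (trOp R (A (R uhat))) = uhat)
    (hAhat_right : ∀ g : Uhat →L[ℂ] ℂ, trOp R (A (R (Ahatinv g))) = g)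
    (α : ℂ) (hα : α ≠ 0)
    (M : Lam →L[ℂ] (Lam →L[ℂ] ℂ))
    -- Assumption A3: `M + X^⊤ M X` has a bounded inverse
    (Ninv : (Lam →L[ℂ] ℂ) →L[ℂ] Lam)
    (hNl : ∀ l : Lam, Ninv ((M + (trOp X).comp (M.comp X)) l) = l)
    (hNr : ∀ μ : Lam →L[ℂ] ℂ, (M + (trOp X).comp (M.comp X)) (Ninv μ) = μ)
    -- Assumption A5: `Ã = A + α T^⊤ M T` has a bounded inverse
    (Atinv : (U →L[ℂ] ℂ) →L[ℂ] U)
    (hAt_l : ∀ u : U, Atinv ((A + α • ((trOp T).comp (M.comp T))) u) = u)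
    (hAt_r : ∀ g : U →L[ℂ] ℂ, (A + α • ((trOp T).comp (M.comp T))) (Atinv g) = g)
    -- surjectivity of the trace operator
    (hTsurj : LinearMap.range (T : U →ₗ[ℂ] Lam) = ⊤) :
    ∃ J : (Lam →L[ℂ] ℂ) →L[ℂ] (Lam →L[ℂ] ℂ),
      (∀ μ : Lam →L[ℂ] ℂ,
        J ((ContinuousLinearMap.id ℂ (Lam →L[ℂ] ℂ) -
          (trOp X).comp (scatOp T X M Atinv α)) μ) = μ) ∧
      (∀ μ : Lam →L[ℂ] ℂ,
        (ContinuousLinearMap.id ℂ (Lam →L[ℂ] ℂ) -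
          (trOp X).comp (scatOp T X M Atinv α)) (J μ) = μ) := by
  classical
  obtain ⟨Tinv, hTinv⟩ := exists_clm_right_inverse T hTsurj
  set Nop : Lam →L[ℂ] (Lam →L[ℂ] ℂ) := M + (trOp X).comp (M.comp X) with hNopdef
  set P : (Lam →L[ℂ] ℂ) →L[ℂ] (Lam →L[ℂ] ℂ) :=
    ContinuousLinearMap.id ℂ (Lam →L[ℂ] ℂ) - (trOp X).comp (scatOp T X M Atinv α) with hPdef
  have hXX : ∀ m : Lam, X (X m) = m := fun m => by
    have := ContinuousLinearMap.ext_iff.1 hX2 m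
    simpa using this
  have htrXX : ∀ ν : Lam →L[ℂ] ℂ, trOp X (trOp X ν) = ν := fun ν => by
    ext m; simp [trOp_apply, hXX]
  have hXN : ∀ l : Lam, trOp X (Nop l) = Nop (X l) := fun l => by
    ext m
    simp only [hNopdef, trOp_apply, ContinuousLinearMap.add_apply,
      ContinuousLinearMap.comp_apply, hXX]
    ring
  have hmemR : ∀ v : U, v ∈ LinearMap.range (R : Uhat →ₗ[ℂ] U) ↔ X (T v) = T v := by
    intro v
    rw [hA2, LinearMap.mem_ker]
    constructor
    · intro h
      have h' : T v - X (T v) = 0 := by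
        simpa [ContinuousLinearMap.comp_apply, ContinuousLinearMap.sub_apply] using h
      exact (sub_eq_zero.1 h').symm
    · intro h
      simp [ContinuousLinearMap.comp_apply, ContinuousLinearMap.sub_apply, h]
  have hPapp : ∀ μ : Lam →L[ℂ] ℂ,
      P μ = μ + trOp X μ - α • trOp X (Nop (T (Atinv (trOp T μ)))) := by
    intro μ
    rw [hPdef]
    simp only [ContinuousLinearMap.sub_apply, ContinuousLinearMap.id_apply,
      ContinuousLinearMap.comp_apply, scatOp, ContinuousLinearMap.add_apply,
      ContinuousLinearMap.neg_apply, ContinuousLinearMap.smul_apply, map_add, map_neg, map_smul,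
      ← hNopdef]
    abel
  -- injectivity
  have hker : LinearMap.ker (P : (Lam →L[ℂ] ℂ) →ₗ[ℂ] (Lam →L[ℂ] ℂ)) = ⊥ := by
    rw [LinearMap.ker_eq_bot']
    intro μ hμ
    set u := Atinv (trOp T μ) with hu
    have hstar : A u + α • trOp T (M (T u)) = trOp T μ := by
      have h := hAt_r (trOp T μ)
      simpa [ContinuousLinearMap.add_apply, ContinuousLinearMap.smul_apply,
        ContinuousLinearMap.comp_apply, ← hu] using h
    have h1 : μ + trOp X μ = α • trOp X (Nop (T u)) := by
      have h := hμ
      rw [ContinuousLinearMap.coe_coe, hPapp μ, ← hu] at h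
      exact sub_eq_zero.1 h
    have h2 : μ + trOp X μ = α • Nop (T u) := by
      have h := congrArg (trOp X) h1
      rw [map_add, map_smul, htrXX, htrXX] at h
      rw [add_comm] at h
      exact h
    have hTXT : X (T u) = T u := by
      have h3 : α • Nop (X (T u)) = α • Nop (T u) := by
        calc α • Nop (X (T u)) = α • trOp X (Nop (T u)) := by rw [hXN]
          _ = μ + trOp X μ := h1.symm
          _ = α • Nop (T u) := h2
      have h4 : Nop (X (T u)) = Nop (T u) := smul_right_injective (Lam →L[ℂ] ℂ) hα h3
      have h5 := congrArg Ninv h4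
      rwa [hNl, hNl] at h5
    obtain ⟨uh, huh⟩ := (hmemR u).2 hTXT
    set ν := μ - α • M (T u) with hνdef
    have hXν : trOp X ν = -ν := by
      have hNopTu : Nop (T u) = M (T u) + trOp X (M (T u)) := by
        rw [hNopdef]
        simp [ContinuousLinearMap.add_apply, ContinuousLinearMap.comp_apply, hTXT]
      have h5 : trOp X μ = α • M (T u) + α • trOp X (M (T u)) - μ := by
        have h := h2
        rw [hNopTu, smul_add] at h
        exact eq_sub_of_add_eq' h
      rw [hνdef, map_sub, map_smul, h5]
      abel
    have hνTR : ∀ xh : Uhat, ν (T (R xh)) = 0 := by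
      intro xh
      have hm : X (T (R xh)) = T (R xh) := (hmemR (R xh)).1 ⟨xh, rfl⟩
      have h := congrArg (fun q : Lam →L[ℂ] ℂ => q (T (R xh))) hXν
      simp only [trOp_apply, hm, ContinuousLinearMap.neg_apply] at h
      linear_combination h / 2
    have hAu : A u = trOp T ν := by
      rw [hνdef, map_sub, map_smul, ← hstar]
      abel
    have hRA : trOp R (A (R uh)) = 0 := by
      rw [show R uh = u from huh, hAu]
      ext xh
      simp [trOp_apply, hνTR]
    have huh0 : uh = 0 := by
      have h := hAhat_left uh
      rw [hRA] at h
      simpa using h.symm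
    have hu0 : u = 0 := by rw [← huh, huh0, map_zero]
    have hTμ0 : trOp T μ = 0 := by
      rw [← hstar, hu0]
      simp only [map_zero]
      module
    ext m
    obtain ⟨v, hv⟩ := LinearMap.range_eq_top.1 hTsurj m
    have h := congrArg (fun q : U →L[ℂ] ℂ => q v) hTμ0
    simpa [trOp_apply, ← hv] using h
  -- surjectivity
  have hrange : LinearMap.range (P : (Lam →L[ℂ] ℂ) →ₗ[ℂ] (Lam →L[ℂ] ℂ)) = ⊤ := by
    rw [LinearMap.range_eq_top]
    intro η
    set w := α⁻¹ • Ninv (η - trOp X η) with hw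
    have hNw : α • Nop w = η - trOp X η := by
      rw [hw, map_smul, smul_smul, mul_inv_cancel₀ hα, one_smul, hNr]
    have hNinvX : ∀ ν₀ : Lam →L[ℂ] ℂ, Ninv (trOp X ν₀) = X (Ninv ν₀) := by
      intro ν₀
      have h := hXN (Ninv ν₀)
      rw [hNr] at h
      rw [h, hNl]
    have hXw : X w = -w := by
      rw [hw, map_smul, ← hNinvX, map_sub, htrXX]
      rw [show trOp X η - η = -(η - trOp X η) from (neg_sub _ _).symm, map_neg, smul_neg]
    set u₀ := Tinv ((2:ℂ)⁻¹ • w) with hu₀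
    have hTu₀ : T u₀ = (2:ℂ)⁻¹ • w := hTinv _
    have hw0 : T u₀ - X (T u₀) = w := by
      rw [hTu₀, map_smul, hXw, smul_neg, sub_neg_eq_add, ← add_smul]
      norm_num
    set g := (2:ℂ)⁻¹ • (η - α • M w) with hg
    have hXg : trOp X g = g := by
      have hNopw : Nop w = M w - trOp X (M w) := by
        rw [hNopdef]
        simp only [ContinuousLinearMap.add_apply, ContinuousLinearMap.comp_apply, hXw,
          map_neg]
        abel
      have h6 : α • M w - α • trOp X (M w) = η - trOp X η := by
        have h := hNw
        rw [hNopw, smul_sub] at h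
        exact h
      have h7 : trOp X η - α • trOp X (M w) = η - α • M w := by
        have h8 : trOp X η - α • trOp X (M w) - (η - α • M w)
            = (α • M w - α • trOp X (M w)) - (η - trOp X η) := by abel
        rw [h6, sub_self] at h8
        exact sub_eq_zero.1 h8
      rw [hg, map_smul, map_sub, map_smul, h7]
    set uh := Ahatinv (trOp R (trOp T g - A u₀)) with huhdef
    set u := u₀ + R uh with hudef
    have hRf : trOp R (A u - trOp T g) = 0 := by
      have h := hAhat_right (trOp R (trOp T g - A u₀))
      have h' : A u - trOp T g = A (R uh) - (trOp T g - A u₀) := by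
        rw [hudef, map_add]; abel
      rw [h', map_sub, h, sub_self]
    set f := A u - trOp T g with hf
    set ν' := trOp Tinv f with hν'
    have hν'T : trOp T ν' = f := by
      ext v
      show f (Tinv (T v)) = f v
      have hT0 : T (Tinv (T v) - v) = 0 := by rw [map_sub, hTinv]; simp
      have hmem : Tinv (T v) - v ∈ LinearMap.range (R : Uhat →ₗ[ℂ] U) := by
        rw [hA2, LinearMap.mem_ker]
        simp [ContinuousLinearMap.comp_apply, ContinuousLinearMap.sub_apply, hT0]
      obtain ⟨xh, hxh⟩ := hmem
      have h0 : f (Tinv (T v) - v) = 0 := by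
        rw [← hxh]
        have h := congrArg (fun q : Uhat →L[ℂ] ℂ => q xh) hRf
        simpa [trOp_apply] using h
      rw [map_sub] at h0
      exact sub_eq_zero.1 h0
    have hν'X : ∀ m : Lam, ν' m + ν' (X m) = 0 := by
      intro m
      have hT1 : T (Tinv m + Tinv (X m)) = m + X m := by rw [map_add, hTinv, hTinv]
      have hmem : Tinv m + Tinv (X m) ∈ LinearMap.range (R : Uhat →ₗ[ℂ] U) := by
        rw [hA2, LinearMap.mem_ker, ContinuousLinearMap.coe_coe, ContinuousLinearMap.comp_apply, hT1]
        simp only [ContinuousLinearMap.sub_apply, ContinuousLinearMap.id_apply, map_add, hXX]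
        abel
      obtain ⟨xh, hxh⟩ := hmem
      have h0 : f (Tinv m + Tinv (X m)) = 0 := by
        rw [← hxh]
        have h := congrArg (fun q : Uhat →L[ℂ] ℂ => q xh) hRf
        simpa [trOp_apply] using h
      rw [map_add] at h0
      exact h0
    set ν := g + ν' with hνdef
    set μ := ν + α • M (T u) with hμdef
    have hTμ : trOp T μ = (A + α • ((trOp T).comp (M.comp T))) u := by
      rw [hμdef, map_add, map_smul, hνdef, map_add, hν'T, hf]
      simp only [ContinuousLinearMap.add_apply, ContinuousLinearMap.smul_apply,
        ContinuousLinearMap.comp_apply]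
      abel
    have hQ : Atinv (trOp T μ) = u := by rw [hTμ]; exact hAt_l u
    refine ⟨μ, ?_⟩
    rw [ContinuousLinearMap.coe_coe, hPapp μ, hQ]
    have hXTRuh : X (T (R uh)) = T (R uh) := (hmemR (R uh)).1 ⟨uh, rfl⟩
    have hXTu : X (T u) = T u - w := by
      have hXu₀ : X (T u₀) = T u₀ - w := by rw [← hw0]; abel
      rw [hudef, map_add, map_add, hXTRuh, hXu₀]
      abel
    have hν'Xop : trOp X ν' = -ν' := by
      ext m
      have h := hν'X m
      simp only [trOp_apply, ContinuousLinearMap.neg_apply]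
      linear_combination h
    have hNopTu : trOp X (Nop (T u)) = trOp X (M (T u)) + (M (T u) - M w) := by
      have hstep : Nop (T u) = M (T u) + trOp X (M (X (T u))) := by
        rw [hNopdef]
        simp [ContinuousLinearMap.add_apply, ContinuousLinearMap.comp_apply]
      rw [hstep, map_add, htrXX, hXTu, map_sub]
    have h2g : g + g + α • M w = η := by
      rw [hg]
      match_scalars <;> ring
    rw [hμdef, hνdef, map_add (trOp X), map_add (trOp X), hXg, hν'Xop, hNopTu,
      map_smul (trOp X)]
    rw [smul_add, smul_sub]
    rw [← h2g]
    abel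
  refine ⟨((ContinuousLinearEquiv.ofBijective P hker hrange).symm :
    (Lam →L[ℂ] ℂ) →L[ℂ] (Lam →L[ℂ] ℂ)), fun μ => ?_, fun μ => ?_⟩
  · exact ContinuousLinearEquiv.ofBijective_symm_apply_apply P hker hrange μ
  · exact ContinuousLinearEquiv.ofBijective_apply_symm_apply P hker hrange μ
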